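/- Let n ≥ 4 and suppose H is a set of triangles T(a,b,c) ⊆ [n-1]^(2) forming an acyclic hypergraph on vertex set [n-1]^(2) with exactly two components, one being the vertex set of T(3,2,1) and the other containing all remaining vertices. Define D = { T(i, i⁺, n) : i ∈ [n-1] } where i⁺ ≡ i+1 (mod n-1) with i⁺ ∈ [n-1]. Then the hypergraph on vertex set [n]^(2) with hyperedge set H ∪ D is acyclic and has exactly two components: one being the vertex set of T(3,2,1), and the other containing all other vertices of [n]^(2). -/

import Mathlib

/-- `PairsSet n` is `[n]^(2)`, the set of ordered pairs of distinct elements of `{1,…,n}`. -/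
def PairsSet (n : ℕ) : Set (ℕ × ℕ) :=
  {p | p.1 ≠ p.2 ∧ 1 ≤ p.1 ∧ p.1 ≤ n ∧ 1 ≤ p.2 ∧ p.2 ≤ n}

/-- The triangle `T(a,b,c) = {(a,b),(b,c),(c,a)}`. -/
def Tset (a b c : ℕ) : Set (ℕ × ℕ) := {(a, b), (b, c), (c, a)}

/-- `h` is a triangle `T(a,b,c)` for some triple of distinct elements of `{1,…,n}`. -/
def IsTriangle (n : ℕ) (h : Set (ℕ × ℕ)) : Prop :=
  ∃ a b c : ℕ, a ≠ b ∧ b ≠ c ∧ a ≠ c ∧ 1 ≤ a ∧ a ≤ n ∧ 1 ≤ b ∧ b ≤ n ∧ 1 ≤ c ∧ c ≤ n ∧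
    h = Tset a b c

/-- The bipartite incidence graph of a hypergraph with vertex set `V` and hyperedge set `H`:
vertices on one side, hyperedges on the other, adjacency given by membership. -/
def incGraph (V : Set (ℕ × ℕ)) (H : Set (Set (ℕ × ℕ))) : SimpleGraph (↥V ⊕ ↥H) where
  Adj x y :=
    (∃ v h, x = Sum.inl v ∧ y = Sum.inr h ∧ (v : ℕ × ℕ) ∈ (h : Set (ℕ × ℕ))) ∨
    (∃ v h, y = Sum.inl v ∧ x = Sum.inr h ∧ (v : ℕ × ℕ) ∈ (h : Set (ℕ × ℕ)))
  symm := ⟨by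
    rintro x y (⟨v, h, rfl, rfl, hm⟩ | ⟨v, h, rfl, rfl, hm⟩)
    · exact Or.inr ⟨v, h, rfl, rfl, hm⟩
    · exact Or.inl ⟨v, h, rfl, rfl, hm⟩⟩
  loopless := ⟨by rintro x (⟨v, h, rfl, hy, -⟩ | ⟨v, h, hy, rfl, -⟩) <;> simp at hy⟩

/-- The hypergraph `(V, H)` is acyclic and has exactly two connected components, one whose
set of (pair-)vertices is exactly the three vertices of `T(3,2,1)` and one containing all
other vertices. -/
def TwoComponents321 (V : Set (ℕ × ℕ)) (H : Set (Set (ℕ × ℕ))) : Prop :=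
  ∃ c₁ c₂ : (incGraph V H).ConnectedComponent, c₁ ≠ c₂ ∧
    (∀ x, (incGraph V H).connectedComponentMk x = c₁ ∨
          (incGraph V H).connectedComponentMk x = c₂) ∧
    (∀ v : ↥V, (incGraph V H).connectedComponentMk (Sum.inl v) = c₁ ↔
      (v : ℕ × ℕ) ∈ Tset 3 2 1)


open SimpleGraph


-- arithmetic helpers
private def pcF (m j : ℕ) : ℕ := (j + m - 2) % m + 1

private lemma suc_lb (m i : ℕ) : 1 ≤ i % m + 1 := Nat.le_add_left 1 _

private lemma suc_ub {m : ℕ} (hm : 3 ≤ m) (i : ℕ) : i % m + 1 ≤ m :=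
  Nat.succ_le_of_lt (Nat.mod_lt _ (by omega))

private lemma suc_ne {m i : ℕ} (hm : 3 ≤ m) (h1 : 1 ≤ i) (h2 : i ≤ m) : i % m + 1 ≠ i := by
  rcases Nat.lt_or_ge i m with h | h
  · rw [Nat.mod_eq_of_lt h]; omega
  · have : i = m := by omega
    subst this
    rw [Nat.mod_self]; omega

private lemma pc_lb (m j : ℕ) : 1 ≤ pcF m j := Nat.le_add_left 1 _

private lemma pc_ub {m : ℕ} (hm : 3 ≤ m) (j : ℕ) : pcF m j ≤ m :=
  Nat.succ_le_of_lt (Nat.mod_lt _ (by omega))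

private lemma suc_val {m i : ℕ} (hm : 3 ≤ m) (h1 : 1 ≤ i) (h2 : i ≤ m) :
    i % m + 1 = if i = m then 1 else i + 1 := by
  split
  · next h => subst h; rw [Nat.mod_self]
  · next h => rw [Nat.mod_eq_of_lt (by omega)]

private lemma pc_val {m j : ℕ} (hm : 3 ≤ m) (h1 : 1 ≤ j) (h2 : j ≤ m) :
    pcF m j = if j = 1 then m else j - 1 := by
  unfold pcF
  split
  · next h =>
    subst h
    have h' : 1 + m - 2 = m - 1 := by omega
    rw [h', Nat.mod_eq_of_lt (by omega)]
    omega
  · next h =>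
    have h' : j + m - 2 = (j - 2) + m := by omega
    rw [h', Nat.add_mod_right, Nat.mod_eq_of_lt (by omega)]
    omega

private lemma suc_pc {m j : ℕ} (hm : 3 ≤ m) (h1 : 1 ≤ j) (h2 : j ≤ m) :
    pcF m j % m + 1 = j := by
  rw [pc_val hm h1 h2]
  split
  · next h => subst h; rw [Nat.mod_self]
  · next h => rw [Nat.mod_eq_of_lt (by omega)]; omega

private lemma pc_suc {m i : ℕ} (hm : 3 ≤ m) (h1 : 1 ≤ i) (h2 : i ≤ m) :
    pcF m (i % m + 1) = i := by
  rw [suc_val hm h1 h2]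
  split
  · next h =>
    subst h
    rw [pc_val hm (by omega) (by omega)]
    simp
  · next h =>
    rw [pc_val hm (by omega) (by omega)]
    split
    · next h' => omega
    · omega

private lemma pc_ne {m j : ℕ} (hm : 3 ≤ m) (h1 : 1 ≤ j) (h2 : j ≤ m) : pcF m j ≠ j := by
  intro h
  have := suc_pc hm h1 h2
  rw [h] at this
  exact suc_ne hm h1 h2 this

private lemma attach_mem {m i : ℕ} (hm : 3 ≤ m) (h1 : 1 ≤ i) (h2 : i ≤ m) :
    ((i, i % m + 1) : ℕ × ℕ) ∈ PairsSet m :=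
  ⟨(suc_ne hm h1 h2).symm, h1, h2, suc_lb m i, suc_ub hm i⟩

private lemma pcpair_mem {m j : ℕ} (hm : 3 ≤ m) (h1 : 1 ≤ j) (h2 : j ≤ m) :
    ((pcF m j, j) : ℕ × ℕ) ∈ PairsSet m :=
  ⟨pc_ne hm h1 h2, pc_lb m j, pc_ub hm j, h1, h2⟩

private lemma mem_Tset {p : ℕ × ℕ} {a b c : ℕ} :
    p ∈ Tset a b c ↔ p = (a, b) ∨ p = (b, c) ∨ p = (c, a) := by simp [Tset]

attribute [local instance] Classical.propDecidable

-- the downward projection map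
private noncomputable def rmap (m : ℕ) (hm : 3 ≤ m) (H : Set (Set (ℕ × ℕ))) :
    (↥(PairsSet (m + 1)) ⊕ ↥(H ∪ {h | ∃ i : ℕ, 1 ≤ i ∧ i ≤ m ∧ h = Tset i (i % m + 1) (m + 1)})) →
      (↥(PairsSet m) ⊕ ↥H)
  | Sum.inl p =>
    if h1 : (p : ℕ × ℕ).1 = m + 1 then
      Sum.inl ⟨((p : ℕ × ℕ).2, (p : ℕ × ℕ).2 % m + 1),
        attach_mem hm p.2.2.2.2.1 (by obtain ⟨a, b, c, d, e⟩ := p.2; omega)⟩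
    else if h2 : (p : ℕ × ℕ).2 = m + 1 then
      Sum.inl ⟨(pcF m (p : ℕ × ℕ).1, (p : ℕ × ℕ).1),
        pcpair_mem hm p.2.2.1 (by obtain ⟨a, b, c, d, e⟩ := p.2; omega)⟩
    else
      Sum.inl ⟨(p : ℕ × ℕ), by obtain ⟨a, b, c, d, e⟩ := p.2; exact ⟨a, b, by omega, d, by omega⟩⟩
  | Sum.inr h =>
    if hh : (h : Set (ℕ × ℕ)) ∈ H then Sum.inr ⟨h, hh⟩
    else
      have hd : ∃ i : ℕ, 1 ≤ i ∧ i ≤ m ∧ (h : Set (ℕ × ℕ)) = Tset i (i % m + 1) (m + 1) :=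
        ((Set.mem_union _ _ _).mp h.2).resolve_left hh
      Sum.inl ⟨(hd.choose, hd.choose % m + 1), attach_mem hm hd.choose_spec.1 hd.choose_spec.2.1⟩

-- the upward inclusion
private noncomputable def ιmap (m : ℕ) (H : Set (Set (ℕ × ℕ))) :
    (↥(PairsSet m) ⊕ ↥H) →
      (↥(PairsSet (m + 1)) ⊕ ↥(H ∪ {h | ∃ i : ℕ, 1 ≤ i ∧ i ≤ m ∧ h = Tset i (i % m + 1) (m + 1)})) :=
  Sum.map (fun v => ⟨v.1, by obtain ⟨a, b, c, d, e⟩ := v.2; exact ⟨a, b, by omega, d, by omega⟩⟩)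
    (fun h => ⟨h.1, Set.mem_union_left _ h.2⟩)

private lemma ιmap_inj (m : ℕ) (H : Set (Set (ℕ × ℕ))) : Function.Injective (ιmap m H) := by
  rintro (a | a) (b | b) hab <;>
    simp only [ιmap, Sum.map_inl, Sum.map_inr, Sum.inl.injEq, Sum.inr.injEq,
      Subtype.mk.injEq] at hab
  · exact congrArg Sum.inl (Subtype.ext hab)
  · exact absurd hab (by simp)
  · exact absurd hab (by simp)
  · exact congrArg Sum.inr (Subtype.ext hab)

private lemma Tinj {m i i' : ℕ} (hm : 3 ≤ m) (hi1 : 1 ≤ i) (hi2 : i ≤ m) (hi1' : 1 ≤ i')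
    (hi2' : i' ≤ m) (heq : Tset i (i % m + 1) (m + 1) = Tset i' (i' % m + 1) (m + 1)) :
    i = i' := by
  have hmem : ((m + 1 : ℕ), i) ∈ Tset i' (i' % m + 1) (m + 1) :=
    heq ▸ mem_Tset.mpr (Or.inr (Or.inr rfl))
  rcases mem_Tset.mp hmem with h | h | h <;> rw [Prod.mk.injEq] at h
  · omega
  · have := Nat.mod_lt i' (show 0 < m by omega)
    omega
  · omega

private lemma Hsub {m : ℕ} {H : Set (Set (ℕ × ℕ))} (hH : ∀ h ∈ H, IsTriangle m h) :
    ∀ h ∈ H, ∀ p ∈ h, p ∈ PairsSet m := by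
  intro h hh p hp
  obtain ⟨a, b, c, hab, hbc, hac, ha1, ha2, hb1, hb2, hc1, hc2, rfl⟩ := hH h hh
  rcases mem_Tset.mp hp with rfl | rfl | rfl
  · exact ⟨hab, ha1, ha2, hb1, hb2⟩
  · exact ⟨hbc, hb1, hb2, hc1, hc2⟩
  · exact ⟨Ne.symm hac, hc1, hc2, ha1, ha2⟩

private lemma rmap_old {m : ℕ} (hm : 3 ≤ m) {H : Set (Set (ℕ × ℕ))} (p : ↥(PairsSet (m + 1)))
    (h1 : (p : ℕ × ℕ).1 ≤ m) (h2 : (p : ℕ × ℕ).2 ≤ m) (pf : (p : ℕ × ℕ) ∈ PairsSet m) :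
    rmap m hm H (Sum.inl p) = Sum.inl ⟨(p : ℕ × ℕ), pf⟩ := by
  simp only [rmap]
  rw [dif_neg (by omega), dif_neg (by omega)]

private lemma rmap_pend1 {m : ℕ} (hm : 3 ≤ m) {H : Set (Set (ℕ × ℕ))} (p : ↥(PairsSet (m + 1)))
    (h1 : (p : ℕ × ℕ).1 = m + 1) (pf : ((p : ℕ × ℕ).2, (p : ℕ × ℕ).2 % m + 1) ∈ PairsSet m) :
    rmap m hm H (Sum.inl p) = Sum.inl ⟨((p : ℕ × ℕ).2, (p : ℕ × ℕ).2 % m + 1), pf⟩ := by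
  simp only [rmap]
  rw [dif_pos h1]

private lemma rmap_pend2 {m : ℕ} (hm : 3 ≤ m) {H : Set (Set (ℕ × ℕ))} (p : ↥(PairsSet (m + 1)))
    (h1 : (p : ℕ × ℕ).1 ≠ m + 1) (h2 : (p : ℕ × ℕ).2 = m + 1)
    (pf : (pcF m (p : ℕ × ℕ).1, (p : ℕ × ℕ).1) ∈ PairsSet m) :
    rmap m hm H (Sum.inl p) = Sum.inl ⟨(pcF m (p : ℕ × ℕ).1, (p : ℕ × ℕ).1), pf⟩ := by
  simp only [rmap]
  rw [dif_neg h1, dif_pos h2]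

private lemma rmap_H {m : ℕ} (hm : 3 ≤ m) {H : Set (Set (ℕ × ℕ))}
    (h : ↥(H ∪ {h | ∃ i : ℕ, 1 ≤ i ∧ i ≤ m ∧ h = Tset i (i % m + 1) (m + 1)}))
    (hh : (h : Set (ℕ × ℕ)) ∈ H) :
    rmap m hm H (Sum.inr h) = Sum.inr ⟨(h : Set (ℕ × ℕ)), hh⟩ := by
  simp only [rmap]
  rw [dif_pos hh]

private lemma rmap_D {m : ℕ} (hm : 3 ≤ m) {H : Set (Set (ℕ × ℕ))}
    (h : ↥(H ∪ {h | ∃ i : ℕ, 1 ≤ i ∧ i ≤ m ∧ h = Tset i (i % m + 1) (m + 1)}))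
    (hh : (h : Set (ℕ × ℕ)) ∉ H) {i : ℕ} (hi1 : 1 ≤ i) (hi2 : i ≤ m)
    (hval : (h : Set (ℕ × ℕ)) = Tset i (i % m + 1) (m + 1)) :
    rmap m hm H (Sum.inr h) = Sum.inl ⟨(i, i % m + 1), attach_mem hm hi1 hi2⟩ := by
  simp only [rmap]
  rw [dif_neg hh]
  have key : ∀ (e : ∃ j : ℕ, 1 ≤ j ∧ j ≤ m ∧ (h : Set (ℕ × ℕ)) = Tset j (j % m + 1) (m + 1)),
      (Sum.inl ⟨(e.choose, e.choose % m + 1), attach_mem hm e.choose_spec.1 e.choose_spec.2.1⟩ :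
        ↥(PairsSet m) ⊕ ↥H) = Sum.inl ⟨(i, i % m + 1), attach_mem hm hi1 hi2⟩ := by
    intro e
    have hsp := e.choose_spec
    have hji : e.choose = i := Tinj hm hsp.1 hsp.2.1 hi1 hi2 (hsp.2.2.symm.trans hval)
    exact congrArg Sum.inl (Subtype.ext (show ((e.choose : ℕ), e.choose % m + 1) = (i, i % m + 1) by rw [hji]))
  exact key _


private lemma adj_of_mem {V : Set (ℕ × ℕ)} {Hs : Set (Set (ℕ × ℕ))} (v : ↥V) (h : ↥Hs)
    (hmem : (v : ℕ × ℕ) ∈ (h : Set (ℕ × ℕ))) :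
    (incGraph V Hs).Adj (Sum.inl v) (Sum.inr h) := Or.inl ⟨v, h, rfl, rfl, hmem⟩

private lemma adj_inl {V : Set (ℕ × ℕ)} {Hs : Set (Set (ℕ × ℕ))} {v : ↥V} {y}
    (h : (incGraph V Hs).Adj (Sum.inl v) y) :
    ∃ e : ↥Hs, y = Sum.inr e ∧ (v : ℕ × ℕ) ∈ (e : Set (ℕ × ℕ)) := by
  rcases h with ⟨v', e, hx, hy, hmem⟩ | ⟨v', e, hy, hx, hmem⟩
  · rw [Sum.inl.injEq] at hx
    subst hx
    exact ⟨e, hy, hmem⟩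
  · exact absurd hx (by simp)

private lemma adj_inr {V : Set (ℕ × ℕ)} {Hs : Set (Set (ℕ × ℕ))} {e : ↥Hs} {y}
    (h : (incGraph V Hs).Adj (Sum.inr e) y) :
    ∃ v : ↥V, y = Sum.inl v ∧ (v : ℕ × ℕ) ∈ (e : Set (ℕ × ℕ)) := by
  rcases h with ⟨v', e', hx, hy, hmem⟩ | ⟨v', e', hy, hx, hmem⟩
  · exact absurd hx (by simp)
  · rw [Sum.inr.injEq] at hx
    subst hx
    exact ⟨v', hy, hmem⟩

private noncomputable def ιhom (m : ℕ) (H : Set (Set (ℕ × ℕ))) :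
    incGraph (PairsSet m) H →g
      incGraph (PairsSet (m + 1))
        (H ∪ {h | ∃ i : ℕ, 1 ≤ i ∧ i ≤ m ∧ h = Tset i (i % m + 1) (m + 1)}) := by
  refine ⟨ιmap m H, ?_⟩
  rintro a b (⟨v, e, rfl, rfl, hmem⟩ | ⟨v, e, rfl, rfl, hmem⟩)
  · exact Or.inl ⟨_, _, rfl, rfl, hmem⟩
  · exact Or.inr ⟨_, _, rfl, rfl, hmem⟩

private lemma ιAdj_reflect {m : ℕ} {H : Set (Set (ℕ × ℕ))} {a b : ↥(PairsSet m) ⊕ ↥H}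
    (h : (incGraph (PairsSet (m + 1))
        (H ∪ {h | ∃ i : ℕ, 1 ≤ i ∧ i ≤ m ∧ h = Tset i (i % m + 1) (m + 1)})).Adj
        (ιmap m H a) (ιmap m H b)) :
    (incGraph (PairsSet m) H).Adj a b := by
  rcases a with v | e <;> rcases b with v' | e' <;>
      simp only [ιmap, Sum.map_inl, Sum.map_inr] at h <;>
      rcases h with ⟨w, f, h1, h2, hmem⟩ | ⟨w, f, h1, h2, hmem⟩
  all_goals
    first
      | exact (Sum.inr_ne_inl h1).elim
      | exact (Sum.inl_ne_inr h2).elim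
      | (rw [Sum.inl.injEq] at h1
         rw [Sum.inr.injEq] at h2
         subst h1
         subst h2
         first
           | exact Or.inl ⟨_, _, rfl, rfl, hmem⟩
           | exact Or.inr ⟨_, _, rfl, rfl, hmem⟩)

private lemma rAdj {m : ℕ} (hm : 3 ≤ m) {H : Set (Set (ℕ × ℕ))}
    (hH : ∀ h ∈ H, IsTriangle m h) {x y}
    (hxy : (incGraph (PairsSet (m + 1))
        (H ∪ {h | ∃ i : ℕ, 1 ≤ i ∧ i ≤ m ∧ h = Tset i (i % m + 1) (m + 1)})).Adj x y) :
    rmap m hm H x = rmap m hm H y ∨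
      (incGraph (PairsSet m) H).Adj (rmap m hm H x) (rmap m hm H y) := by
  have key : ∀ (v : ↥(PairsSet (m + 1)))
      (h : ↥(H ∪ {h | ∃ i : ℕ, 1 ≤ i ∧ i ≤ m ∧ h = Tset i (i % m + 1) (m + 1)})),
      (v : ℕ × ℕ) ∈ (h : Set (ℕ × ℕ)) →
      rmap m hm H (Sum.inl v) = rmap m hm H (Sum.inr h) ∨
        (incGraph (PairsSet m) H).Adj (rmap m hm H (Sum.inl v)) (rmap m hm H (Sum.inr h)) := by
    intro v h hmem
    by_cases hh : (h : Set (ℕ × ℕ)) ∈ H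
    · have hvm : (v : ℕ × ℕ) ∈ PairsSet m := Hsub hH _ hh _ hmem
      rw [rmap_old hm v hvm.2.2.1 hvm.2.2.2.2 hvm, rmap_H hm h hh]
      exact Or.inr (adj_of_mem _ _ hmem)
    · obtain ⟨i, hi1, hi2, hval⟩ := ((Set.mem_union _ _ _).mp h.2).resolve_left hh
      rw [rmap_D hm h hh hi1 hi2 hval]
      left
      rw [hval] at hmem
      rcases mem_Tset.mp hmem with hv | hv | hv
      · rw [rmap_old hm v (by rw [hv]; exact hi2) (by rw [hv]; exact suc_ub hm i)
          (by rw [hv]; exact attach_mem hm hi1 hi2)]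
        exact congrArg Sum.inl (Subtype.ext hv)
      · have h2 : (v : ℕ × ℕ).2 = m + 1 := congrArg Prod.snd hv
        have h1 : (v : ℕ × ℕ).1 = i % m + 1 := congrArg Prod.fst hv
        have h1' : (v : ℕ × ℕ).1 ≠ m + 1 := by
          have := suc_ub hm i; omega
        rw [rmap_pend2 hm v h1' h2
          (by rw [h1, pc_suc hm hi1 hi2]; exact attach_mem hm hi1 hi2)]
        exact congrArg Sum.inl (Subtype.ext
          (show (pcF m (v : ℕ × ℕ).1, (v : ℕ × ℕ).1) = (i, i % m + 1) by
            rw [h1, pc_suc hm hi1 hi2]))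
      · have h1 : (v : ℕ × ℕ).1 = m + 1 := congrArg Prod.fst hv
        have h2 : (v : ℕ × ℕ).2 = i := congrArg Prod.snd hv
        rw [rmap_pend1 hm v h1 (by rw [h2]; exact attach_mem hm hi1 hi2)]
        exact congrArg Sum.inl (Subtype.ext
          (show ((v : ℕ × ℕ).2, (v : ℕ × ℕ).2 % m + 1) = (i, i % m + 1) by rw [h2]))
  rcases hxy with ⟨v, h, rfl, rfl, hmem⟩ | ⟨v, h, rfl, rfl, hmem⟩
  · exact key v h hmem
  · rcases key v h hmem with heq | hadj
    · exact Or.inl heq.symm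
    · exact Or.inr hadj.symm

private lemma rReach {m : ℕ} (hm : 3 ≤ m) {H : Set (Set (ℕ × ℕ))}
    (hH : ∀ h ∈ H, IsTriangle m h) {x y}
    (hr : (incGraph (PairsSet (m + 1))
        (H ∪ {h | ∃ i : ℕ, 1 ≤ i ∧ i ≤ m ∧ h = Tset i (i % m + 1) (m + 1)})).Reachable x y) :
    (incGraph (PairsSet m) H).Reachable (rmap m hm H x) (rmap m hm H y) := by
  obtain ⟨w⟩ := hr
  induction w with
  | nil => exact SimpleGraph.Reachable.refl _
  | cons ha q ih =>
    rcases rAdj hm hH ha with heq | hadj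
    · rw [heq]; exact ih
    · exact hadj.reachable.trans ih

private lemma pend_edge1 {m : ℕ} (hm : 3 ≤ m) {H : Set (Set (ℕ × ℕ))}
    (hH : ∀ h ∈ H, IsTriangle m h) (p : ℕ × ℕ) (hp1 : p.1 = m + 1) (hp2' : 1 ≤ p.2)
    (hp2 : p.2 ≤ m) :
    ∀ h ∈ H ∪ {h | ∃ i : ℕ, 1 ≤ i ∧ i ≤ m ∧ h = Tset i (i % m + 1) (m + 1)}, p ∈ h →
      h = Tset p.2 (p.2 % m + 1) (m + 1) := by
  intro h hhu hp
  rcases hhu with hh | ⟨i, hi1, hi2, rfl⟩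
  · have := Hsub hH h hh p hp
    have := this.2.2.1
    omega
  · rcases mem_Tset.mp hp with hv | hv | hv
    · have := congrArg Prod.fst hv
      omega
    · have := congrArg Prod.fst hv
      have := suc_ub hm i
      omega
    · have h2 : p.2 = i := congrArg Prod.snd hv
      rw [h2]
  
private lemma pend_edge2 {m : ℕ} (hm : 3 ≤ m) {H : Set (Set (ℕ × ℕ))}
    (hH : ∀ h ∈ H, IsTriangle m h) (p : ℕ × ℕ) (hp1' : 1 ≤ p.1) (hp1 : p.1 ≤ m)
    (hp2 : p.2 = m + 1) :
    ∀ h ∈ H ∪ {h | ∃ i : ℕ, 1 ≤ i ∧ i ≤ m ∧ h = Tset i (i % m + 1) (m + 1)}, p ∈ h →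
      h = Tset (pcF m p.1) (pcF m p.1 % m + 1) (m + 1) := by
  intro h hhu hp
  rcases hhu with hh | ⟨i, hi1, hi2, rfl⟩
  · have := (Hsub hH h hh p hp).2.2.2.2
    omega
  · rcases mem_Tset.mp hp with hv | hv | hv
    · have := congrArg Prod.snd hv
      have := suc_ub hm i
      omega
    · have h1 : p.1 = i % m + 1 := congrArg Prod.fst hv
      rw [h1, pc_suc hm hi1 hi2]
    · have := congrArg Prod.fst hv
      omega

private lemma attach_not321 {m : ℕ} (hm : 3 ≤ m) {i : ℕ} (h1 : 1 ≤ i) (h2 : i ≤ m) :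
    ((i, i % m + 1) : ℕ × ℕ) ∉ Tset 3 2 1 := by
  intro hmem
  have hs := suc_val hm h1 h2
  rcases mem_Tset.mp hmem with h | h | h <;> rw [Prod.mk.injEq] at h <;>
    split at hs <;> omega


private lemma cycle_pendant {V : Type*} {G : SimpleGraph V} {x v u : V} (c : G.Walk x x)
    (hc : c.IsCycle) (hv : v ∈ c.support) (hu : ∀ w ∈ c.support, G.Adj v w → w = u) : False := by
  classical
  have aux : ∀ (d : G.Walk v v), ¬ d.Nil →
      ∃ w, w ∈ d.support ∧ G.Adj v w ∧ d.edges.head? = some s(v, w) := by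
    intro d hd
    cases d with
    | nil => simp at hd
    | cons h q => exact ⟨_, by simp, h, by simp⟩
  set c' := c.rotate _ hv with hc'def
  have hcyc' : c'.IsCycle := hc.rotate hv
  have hsub : ∀ w ∈ c'.support, w ∈ c.support := by
    intro w hw
    rw [Walk.support_eq_cons] at hw
    rcases List.mem_cons.mp hw with rfl | hw
    · exact hv
    · have := (Walk.support_rotate c _ hv).mem_iff.mp hw
      rw [Walk.support_eq_cons c]
      exact List.mem_cons_of_mem _ this
  obtain ⟨w₁, hw₁s, hadj₁, hhead₁⟩ := aux c' hcyc'.not_nil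
  have hrevnil : ¬ c'.reverse.Nil := by
    rw [Walk.nil_iff_length_eq, Walk.length_reverse, ← Walk.nil_iff_length_eq]
    exact hcyc'.not_nil
  obtain ⟨w₂, hw₂s, hadj₂, hhead₂⟩ := aux c'.reverse hrevnil
  have hw₁u : w₁ = u := hu w₁ (hsub _ hw₁s) hadj₁
  have hw₂s' : w₂ ∈ c'.support := by
    rw [Walk.support_reverse] at hw₂s
    exact List.mem_reverse.mp hw₂s
  have hw₂u : w₂ = u := hu w₂ (hsub _ hw₂s') hadj₂
  rw [hw₁u] at hhead₁
  rw [hw₂u] at hhead₂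
  have hnodup : c'.edges.Nodup := hcyc'.edges_nodup
  have hlen : 3 ≤ c'.edges.length := by rw [Walk.length_edges]; exact hcyc'.three_le_length
  rw [Walk.edges_reverse, List.head?_reverse] at hhead₂
  rcases hlst : c'.edges with _ | ⟨e, t⟩
  · rw [hlst] at hlen; simp at hlen
  · rw [hlst] at hhead₁ hhead₂ hnodup hlen
    have he : e = s(v, u) := by simpa using hhead₁
    have ht : t ≠ [] := by
      intro h; rw [h] at hlen; simp at hlen
    have : (e :: t).getLast (by simp) = s(v, u) := by
      rw [List.getLast?_eq_getLast (l := e :: t) (by simp)] at hhead₂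
      simpa using hhead₂
    rw [List.getLast_cons ht] at this
    have hmem : s(v, u) ∈ t := this ▸ List.getLast_mem ht
    rw [← he] at hmem
    exact (List.nodup_cons.mp hnodup).1 hmem

open SimpleGraph.Walk in
private lemma master (m : ℕ) (hm : 3 ≤ m) (H : Set (Set (ℕ × ℕ)))
    (hH : ∀ h ∈ H, IsTriangle m h)
    (hacyc : (incGraph (PairsSet m) H).IsAcyclic)
    (hcomp : TwoComponents321 (PairsSet m) H) :
    (incGraph (PairsSet (m + 1))
        (H ∪ {h | ∃ i : ℕ, 1 ≤ i ∧ i ≤ m ∧ h = Tset i (i % m + 1) (m + 1)})).IsAcyclic ∧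
    TwoComponents321 (PairsSet (m + 1))
        (H ∪ {h | ∃ i : ℕ, 1 ≤ i ∧ i ≤ m ∧ h = Tset i (i % m + 1) (m + 1)}) := by
  classical
  constructor
  · -- acyclicity
    intro x c hc
    have pend1 : ∀ (p : ↥(PairsSet (m + 1))), (p : ℕ × ℕ).1 = m + 1 →
        Sum.inl p ∉ c.support := by
      intro p hp1 hmem
      obtain ⟨hne, ha1, ha2, hb1, hb2⟩ := p.2
      have hp2 : (p : ℕ × ℕ).2 ≤ m := by omega
      refine cycle_pendant c hc hmem
        (u := Sum.inr ⟨Tset (p : ℕ × ℕ).2 ((p : ℕ × ℕ).2 % m + 1) (m + 1),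
          Set.mem_union_right _ ⟨(p : ℕ × ℕ).2, hb1, hp2, rfl⟩⟩) ?_
      intro w hw hadj
      obtain ⟨e, rfl, hme⟩ := adj_inl hadj
      exact congrArg Sum.inr (Subtype.ext (pend_edge1 hm hH _ hp1 hb1 hp2 _ e.2 hme))
    have pend2 : ∀ (p : ↥(PairsSet (m + 1))), (p : ℕ × ℕ).2 = m + 1 →
        Sum.inl p ∉ c.support := by
      intro p hp2 hmem
      obtain ⟨hne, ha1, ha2, hb1, hb2⟩ := p.2
      have hp1 : (p : ℕ × ℕ).1 ≤ m := by omega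
      refine cycle_pendant c hc hmem
        (u := Sum.inr ⟨Tset (pcF m (p : ℕ × ℕ).1) (pcF m (p : ℕ × ℕ).1 % m + 1) (m + 1),
          Set.mem_union_right _ ⟨pcF m (p : ℕ × ℕ).1, pc_lb m _, pc_ub hm _, rfl⟩⟩) ?_
      intro w hw hadj
      obtain ⟨e, rfl, hme⟩ := adj_inl hadj
      exact congrArg Sum.inr (Subtype.ext (pend_edge2 hm hH _ ha1 hp1 hp2 _ e.2 hme))
    have dnot : ∀ (h : ↥(H ∪ {h | ∃ i : ℕ, 1 ≤ i ∧ i ≤ m ∧ h = Tset i (i % m + 1) (m + 1)})),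
        (h : Set (ℕ × ℕ)) ∉ H → Sum.inr h ∉ c.support := by
      intro h hh hmem
      obtain ⟨i, hi1, hi2, hval⟩ := ((Set.mem_union _ _ _).mp h.2).resolve_left hh
      refine cycle_pendant c hc hmem
        (u := Sum.inl ⟨(i, i % m + 1),
          ⟨(suc_ne hm hi1 hi2).symm, hi1, by omega, suc_lb m i,
            by have := suc_ub hm i; omega⟩⟩) ?_
      intro w hw hadj
      obtain ⟨q, rfl, hq⟩ := adj_inr hadj
      rw [hval] at hq
      rcases mem_Tset.mp hq with h1 | h1 | h1
      · exact congrArg Sum.inl (Subtype.ext h1)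
      · exact absurd hw (pend2 q (congrArg Prod.snd h1))
      · exact absurd hw (pend1 q (congrArg Prod.fst h1))
    have all_old : ∀ y ∈ c.support, ∃ b, ιmap m H b = y := by
      intro y hy
      match y with
      | Sum.inl p =>
        by_cases h1 : (p : ℕ × ℕ).1 = m + 1
        · exact absurd hy (pend1 p h1)
        by_cases h2 : (p : ℕ × ℕ).2 = m + 1
        · exact absurd hy (pend2 p h2)
        refine ⟨Sum.inl ⟨(p : ℕ × ℕ), ?_⟩, ?_⟩
        · obtain ⟨a, b, c', d, e⟩ := p.2
          exact ⟨a, b, by omega, d, by omega⟩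
        · exact congrArg Sum.inl (Subtype.ext rfl)
      | Sum.inr h =>
        by_cases hh : (h : Set (ℕ × ℕ)) ∈ H
        · exact ⟨Sum.inr ⟨(h : Set (ℕ × ℕ)), hh⟩, congrArg Sum.inr (Subtype.ext rfl)⟩
        · exact absurd hy (dnot h hh)
    have pull : ∀ {s y} (w : (incGraph (PairsSet (m + 1))
          (H ∪ {h | ∃ i : ℕ, 1 ≤ i ∧ i ≤ m ∧ h = Tset i (i % m + 1) (m + 1)})).Walk s y),
        (∀ z ∈ w.support, ∃ b, ιmap m H b = z) → ∀ a, ∀ ha : ιmap m H a = s,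
        ∃ b, ∃ hb : ιmap m H b = y, ∃ w' : (incGraph (PairsSet m) H).Walk a b,
          w'.map (ιhom m H) = w.copy ha.symm hb.symm := by
      intro s y w
      induction w with
      | nil =>
        intro hs a ha
        refine ⟨a, ha, Walk.nil, ?_⟩
        subst ha
        rfl
      | @cons u v z hadj q ih =>
        intro hs a ha
        obtain ⟨a', ha'⟩ := hs v
          (by rw [Walk.support_cons]; exact List.mem_cons_of_mem _ q.start_mem_support)
        subst ha
        subst ha'
        obtain ⟨b, hb, w', hw'⟩ := ih
          (fun z' hz' => hs z' (by rw [Walk.support_cons]; exact List.mem_cons_of_mem _ hz'))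
          a' rfl
        refine ⟨b, hb, Walk.cons (ιAdj_reflect hadj) w', ?_⟩
        rw [Walk.map_cons, hw', Walk.copy_cons]
        rfl
    obtain ⟨a, ha⟩ := all_old x c.start_mem_support
    obtain ⟨b, hb, w', hw'⟩ := pull c all_old a ha
    have hba : b = a := ιmap_inj m H (hb.trans ha.symm)
    subst hba
    apply hacyc w'
    have hinj : Function.Injective ⇑(ιhom m H) := fun u v huv => ιmap_inj m H huv
    rw [← Walk.map_isCycle_iff_of_injective hinj, hw']
    exact (Walk.isCycle_copy c ha.symm).mpr hc
  · -- components
    obtain ⟨c₁, c₂, hc12, htot, hiff⟩ := hcomp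
    have ht0m : ((3, 2) : ℕ × ℕ) ∈ PairsSet m := ⟨by omega, by omega, by omega, by omega, by omega⟩
    have hv0m : ((1, 2) : ℕ × ℕ) ∈ PairsSet m := ⟨by omega, by omega, by omega, by omega, by omega⟩
    have ht0M : ((3, 2) : ℕ × ℕ) ∈ PairsSet (m + 1) :=
      ⟨by omega, by omega, by omega, by omega, by omega⟩
    have hv0M : ((1, 2) : ℕ × ℕ) ∈ PairsSet (m + 1) :=
      ⟨by omega, by omega, by omega, by omega, by omega⟩
    have hmkt0 : (incGraph (PairsSet m) H).connectedComponentMk (Sum.inl (⟨((3 : ℕ), (2 : ℕ)), ht0m⟩ : ↥(PairsSet m))) = c₁ :=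
      (hiff (⟨((3 : ℕ), (2 : ℕ)), ht0m⟩ : ↥(PairsSet m))).mpr (mem_Tset.mpr (Or.inl rfl))
    have hmkv0 : (incGraph (PairsSet m) H).connectedComponentMk (Sum.inl (⟨((1 : ℕ), (2 : ℕ)), hv0m⟩ : ↥(PairsSet m))) = c₂ := by
      rcases htot (Sum.inl (⟨((1 : ℕ), (2 : ℕ)), hv0m⟩ : ↥(PairsSet m))) with h | h
      · exfalso
        have := (hiff (⟨((1 : ℕ), (2 : ℕ)), hv0m⟩ : ↥(PairsSet m))).mp h
        rcases mem_Tset.mp this with h' | h' | h' <;> rw [Prod.mk.injEq] at h' <;> omega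
      · exact h
    have hrT0 : rmap m hm H (Sum.inl (⟨((3 : ℕ), (2 : ℕ)), ht0M⟩ : ↥(PairsSet (m + 1)))) = Sum.inl (⟨((3 : ℕ), (2 : ℕ)), ht0m⟩ : ↥(PairsSet m)) :=
      rmap_old hm (⟨((3 : ℕ), (2 : ℕ)), ht0M⟩ : ↥(PairsSet (m + 1))) (by show (3 : ℕ) ≤ m; omega) (by show (2 : ℕ) ≤ m; omega) ht0m
    have hrV0 : rmap m hm H (Sum.inl (⟨((1 : ℕ), (2 : ℕ)), hv0M⟩ : ↥(PairsSet (m + 1)))) = Sum.inl (⟨((1 : ℕ), (2 : ℕ)), hv0m⟩ : ↥(PairsSet m)) :=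
      rmap_old hm (⟨((1 : ℕ), (2 : ℕ)), hv0M⟩ : ↥(PairsSet (m + 1))) (by show (1 : ℕ) ≤ m; omega) (by show (2 : ℕ) ≤ m; omega) hv0m
    have up : ∀ a b, (incGraph (PairsSet m) H).Reachable a b → (incGraph (PairsSet (m + 1)) (H ∪ {h | ∃ i : ℕ, 1 ≤ i ∧ i ≤ m ∧ h = Tset i (i % m + 1) (m + 1)})).Reachable (ιmap m H a) (ιmap m H b) :=
      fun a b h => h.map (ιhom m H)
    have hiT0 : ιmap m H (Sum.inl (⟨((3 : ℕ), (2 : ℕ)), ht0m⟩ : ↥(PairsSet m))) = Sum.inl (⟨((3 : ℕ), (2 : ℕ)), ht0M⟩ : ↥(PairsSet (m + 1))) := congrArg Sum.inl (Subtype.ext rfl)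
    have hiV0 : ιmap m H (Sum.inl (⟨((1 : ℕ), (2 : ℕ)), hv0m⟩ : ↥(PairsSet m))) = Sum.inl (⟨((1 : ℕ), (2 : ℕ)), hv0M⟩ : ↥(PairsSet (m + 1))) := congrArg Sum.inl (Subtype.ext rfl)
    have old_reach : ∀ (p : ↥(PairsSet (m + 1))) (hp : (p : ℕ × ℕ) ∈ PairsSet m),
        (incGraph (PairsSet (m + 1)) (H ∪ {h | ∃ i : ℕ, 1 ≤ i ∧ i ≤ m ∧ h = Tset i (i % m + 1) (m + 1)})).Reachable (Sum.inl p) (Sum.inl (⟨((3 : ℕ), (2 : ℕ)), ht0M⟩ : ↥(PairsSet (m + 1)))) ∨ (incGraph (PairsSet (m + 1)) (H ∪ {h | ∃ i : ℕ, 1 ≤ i ∧ i ≤ m ∧ h = Tset i (i % m + 1) (m + 1)})).Reachable (Sum.inl p) (Sum.inl (⟨((1 : ℕ), (2 : ℕ)), hv0M⟩ : ↥(PairsSet (m + 1)))) := by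
      intro p hp
      have hinc : ιmap m H (Sum.inl ⟨(p : ℕ × ℕ), hp⟩) = Sum.inl p :=
        congrArg Sum.inl (Subtype.ext rfl)
      rcases htot (Sum.inl ⟨(p : ℕ × ℕ), hp⟩) with h | h
      · left
        have hr : (incGraph (PairsSet m) H).Reachable (Sum.inl ⟨(p : ℕ × ℕ), hp⟩) (Sum.inl (⟨((3 : ℕ), (2 : ℕ)), ht0m⟩ : ↥(PairsSet m))) :=
          SimpleGraph.ConnectedComponent.exact (h.trans hmkt0.symm)
        have := up _ _ hr
        rw [hinc, hiT0] at this
        exact this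
      · right
        have hr : (incGraph (PairsSet m) H).Reachable (Sum.inl ⟨(p : ℕ × ℕ), hp⟩) (Sum.inl (⟨((1 : ℕ), (2 : ℕ)), hv0m⟩ : ↥(PairsSet m))) :=
          SimpleGraph.ConnectedComponent.exact (h.trans hmkv0.symm)
        have := up _ _ hr
        rw [hinc, hiV0] at this
        exact this
    have memm1 : ∀ i, 1 ≤ i → i ≤ m → ((i, i % m + 1) : ℕ × ℕ) ∈ PairsSet (m + 1) :=
      fun i h1 h2 => ⟨(suc_ne hm h1 h2).symm, h1, by omega, suc_lb m i,
        by have := suc_ub hm i; omega⟩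
    have attachA_reach : ∀ i (h1 : 1 ≤ i) (h2 : i ≤ m),
        (incGraph (PairsSet (m + 1)) (H ∪ {h | ∃ i : ℕ, 1 ≤ i ∧ i ≤ m ∧ h = Tset i (i % m + 1) (m + 1)})).Reachable (Sum.inl ⟨(i, i % m + 1), memm1 i h1 h2⟩) (Sum.inl (⟨((1 : ℕ), (2 : ℕ)), hv0M⟩ : ↥(PairsSet (m + 1)))) := by
      intro i h1 h2
      have hattm : ((i, i % m + 1) : ℕ × ℕ) ∈ PairsSet m := attach_mem hm h1 h2
      have hmkA : (incGraph (PairsSet m) H).connectedComponentMk (Sum.inl ⟨(i, i % m + 1), hattm⟩) = c₂ := by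
        rcases htot (Sum.inl ⟨(i, i % m + 1), hattm⟩) with h | h
        · exact absurd ((hiff _).mp h) (attach_not321 hm h1 h2)
        · exact h
      have hr : (incGraph (PairsSet m) H).Reachable (Sum.inl ⟨(i, i % m + 1), hattm⟩) (Sum.inl (⟨((1 : ℕ), (2 : ℕ)), hv0m⟩ : ↥(PairsSet m))) :=
        SimpleGraph.ConnectedComponent.exact (hmkA.trans hmkv0.symm)
      have := up _ _ hr
      rw [hiV0] at this
      exact this
    have dmem : ∀ i, 1 ≤ i → i ≤ m → Tset i (i % m + 1) (m + 1) ∈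
        H ∪ {h | ∃ i : ℕ, 1 ≤ i ∧ i ≤ m ∧ h = Tset i (i % m + 1) (m + 1)} :=
      fun i h1 h2 => Set.mem_union_right _ ⟨i, h1, h2, rfl⟩
    have edgeD_reach : ∀ i (h1 : 1 ≤ i) (h2 : i ≤ m),
        (incGraph (PairsSet (m + 1)) (H ∪ {h | ∃ i : ℕ, 1 ≤ i ∧ i ≤ m ∧ h = Tset i (i % m + 1) (m + 1)})).Reachable (Sum.inr ⟨Tset i (i % m + 1) (m + 1), dmem i h1 h2⟩) (Sum.inl (⟨((1 : ℕ), (2 : ℕ)), hv0M⟩ : ↥(PairsSet (m + 1)))) := by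
      intro i h1 h2
      have hadj : (incGraph (PairsSet (m + 1)) (H ∪ {h | ∃ i : ℕ, 1 ≤ i ∧ i ≤ m ∧ h = Tset i (i % m + 1) (m + 1)})).Adj (Sum.inl ⟨(i, i % m + 1), memm1 i h1 h2⟩)
          (Sum.inr ⟨Tset i (i % m + 1) (m + 1), dmem i h1 h2⟩) :=
        adj_of_mem _ _ (mem_Tset.mpr (Or.inl rfl))
      exact hadj.symm.reachable.trans (attachA_reach i h1 h2)
    have attach_reach : ∀ (p : ↥(PairsSet (m + 1))),
        ((p : ℕ × ℕ).1 = m + 1 ∨ (p : ℕ × ℕ).2 = m + 1) →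
        (incGraph (PairsSet (m + 1)) (H ∪ {h | ∃ i : ℕ, 1 ≤ i ∧ i ≤ m ∧ h = Tset i (i % m + 1) (m + 1)})).Reachable (Sum.inl p) (Sum.inl (⟨((1 : ℕ), (2 : ℕ)), hv0M⟩ : ↥(PairsSet (m + 1)))) := by
      intro p hcase
      obtain ⟨hne, ha1, ha2, hb1, hb2⟩ := p.2
      rcases hcase with hp1 | hp2
      · have h2 : (p : ℕ × ℕ).2 ≤ m := by omega
        have hpd : (p : ℕ × ℕ) ∈ Tset (p : ℕ × ℕ).2 ((p : ℕ × ℕ).2 % m + 1) (m + 1) :=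
          mem_Tset.mpr (Or.inr (Or.inr (Prod.ext hp1 rfl)))
        have hadj : (incGraph (PairsSet (m + 1)) (H ∪ {h | ∃ i : ℕ, 1 ≤ i ∧ i ≤ m ∧ h = Tset i (i % m + 1) (m + 1)})).Adj (Sum.inl p)
            (Sum.inr ⟨Tset (p : ℕ × ℕ).2 ((p : ℕ × ℕ).2 % m + 1) (m + 1), dmem _ hb1 h2⟩) :=
          adj_of_mem _ _ hpd
        exact hadj.reachable.trans (edgeD_reach _ hb1 h2)
      · have h1 : (p : ℕ × ℕ).1 ≤ m := by omega
        have hpd : (p : ℕ × ℕ) ∈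
            Tset (pcF m (p : ℕ × ℕ).1) (pcF m (p : ℕ × ℕ).1 % m + 1) (m + 1) := by
          refine mem_Tset.mpr (Or.inr (Or.inl ?_))
          rw [suc_pc hm ha1 h1]
          exact Prod.ext rfl hp2
        have hadj : (incGraph (PairsSet (m + 1)) (H ∪ {h | ∃ i : ℕ, 1 ≤ i ∧ i ≤ m ∧ h = Tset i (i % m + 1) (m + 1)})).Adj (Sum.inl p)
            (Sum.inr ⟨Tset (pcF m (p : ℕ × ℕ).1) (pcF m (p : ℕ × ℕ).1 % m + 1) (m + 1),
              dmem _ (pc_lb m _) (pc_ub hm _)⟩) :=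
          adj_of_mem _ _ hpd
        exact hadj.reachable.trans (edgeD_reach _ (pc_lb m _) (pc_ub hm _))
    have edge_reach : ∀ (h : ↥(H ∪ {h | ∃ i : ℕ, 1 ≤ i ∧ i ≤ m ∧ h = Tset i (i % m + 1) (m + 1)})),
        (incGraph (PairsSet (m + 1)) (H ∪ {h | ∃ i : ℕ, 1 ≤ i ∧ i ≤ m ∧ h = Tset i (i % m + 1) (m + 1)})).Reachable (Sum.inr h) (Sum.inl (⟨((3 : ℕ), (2 : ℕ)), ht0M⟩ : ↥(PairsSet (m + 1)))) ∨ (incGraph (PairsSet (m + 1)) (H ∪ {h | ∃ i : ℕ, 1 ≤ i ∧ i ≤ m ∧ h = Tset i (i % m + 1) (m + 1)})).Reachable (Sum.inr h) (Sum.inl (⟨((1 : ℕ), (2 : ℕ)), hv0M⟩ : ↥(PairsSet (m + 1)))) := by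
      intro h
      rcases (Set.mem_union _ _ _).mp h.2 with hh | hd
      · obtain ⟨a, b, c', hab, hbc, hac, ha1, ha2, hb1, hb2, hc1, hc2, hval⟩ := hH _ hh
        have hab_mem : ((a, b) : ℕ × ℕ) ∈ (h : Set (ℕ × ℕ)) := by
          rw [hval]; exact mem_Tset.mpr (Or.inl rfl)
        have habP : ((a, b) : ℕ × ℕ) ∈ PairsSet (m + 1) := ⟨hab, ha1, by omega, hb1, by omega⟩
        have habPm : ((a, b) : ℕ × ℕ) ∈ PairsSet m := ⟨hab, ha1, ha2, hb1, hb2⟩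
        have step : (incGraph (PairsSet (m + 1)) (H ∪ {h | ∃ i : ℕ, 1 ≤ i ∧ i ≤ m ∧ h = Tset i (i % m + 1) (m + 1)})).Adj (Sum.inr h) (Sum.inl ⟨(a, b), habP⟩) :=
          (adj_of_mem ⟨(a, b), habP⟩ h hab_mem).symm
        rcases old_reach ⟨(a, b), habP⟩ habPm with hr | hr
        · exact Or.inl (step.reachable.trans hr)
        · exact Or.inr (step.reachable.trans hr)
      · obtain ⟨i, hi1, hi2, hval⟩ := hd
        right
        have hA_mem : ((i, i % m + 1) : ℕ × ℕ) ∈ (h : Set (ℕ × ℕ)) := by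
          rw [hval]; exact mem_Tset.mpr (Or.inl rfl)
        have step : (incGraph (PairsSet (m + 1)) (H ∪ {h | ∃ i : ℕ, 1 ≤ i ∧ i ≤ m ∧ h = Tset i (i % m + 1) (m + 1)})).Adj (Sum.inr h) (Sum.inl ⟨(i, i % m + 1), memm1 i hi1 hi2⟩) :=
          (adj_of_mem _ h hA_mem).symm
        exact step.reachable.trans (attachA_reach i hi1 hi2)
    refine ⟨(incGraph (PairsSet (m + 1)) (H ∪ {h | ∃ i : ℕ, 1 ≤ i ∧ i ≤ m ∧ h = Tset i (i % m + 1) (m + 1)})).connectedComponentMk (Sum.inl (⟨((3 : ℕ), (2 : ℕ)), ht0M⟩ : ↥(PairsSet (m + 1)))), (incGraph (PairsSet (m + 1)) (H ∪ {h | ∃ i : ℕ, 1 ≤ i ∧ i ≤ m ∧ h = Tset i (i % m + 1) (m + 1)})).connectedComponentMk (Sum.inl (⟨((1 : ℕ), (2 : ℕ)), hv0M⟩ : ↥(PairsSet (m + 1)))),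
      ?_, ?_, ?_⟩
    · intro heq
      have hreach := SimpleGraph.ConnectedComponent.exact heq
      have hdown := rReach hm hH hreach
      rw [hrT0, hrV0] at hdown
      refine hc12 ?_
      rw [← hmkt0, ← hmkv0]
      exact SimpleGraph.ConnectedComponent.sound hdown
    · intro x
      match x with
      | Sum.inl p =>
        by_cases h1 : (p : ℕ × ℕ).1 = m + 1
        · exact Or.inr (SimpleGraph.ConnectedComponent.sound (attach_reach p (Or.inl h1)))
        by_cases h2 : (p : ℕ × ℕ).2 = m + 1
        · exact Or.inr (SimpleGraph.ConnectedComponent.sound (attach_reach p (Or.inr h2)))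
        have hpm : (p : ℕ × ℕ) ∈ PairsSet m := by
          obtain ⟨a, b, c', d, e⟩ := p.2
          exact ⟨a, b, by omega, d, by omega⟩
        rcases old_reach p hpm with hr | hr
        · exact Or.inl (SimpleGraph.ConnectedComponent.sound hr)
        · exact Or.inr (SimpleGraph.ConnectedComponent.sound hr)
      | Sum.inr h =>
        rcases edge_reach h with hr | hr
        · exact Or.inl (SimpleGraph.ConnectedComponent.sound hr)
        · exact Or.inr (SimpleGraph.ConnectedComponent.sound hr)
    · intro v
      constructor
      · intro hmk
        have hreach : (incGraph (PairsSet (m + 1)) (H ∪ {h | ∃ i : ℕ, 1 ≤ i ∧ i ≤ m ∧ h = Tset i (i % m + 1) (m + 1)})).Reachable (Sum.inl v) (Sum.inl (⟨((3 : ℕ), (2 : ℕ)), ht0M⟩ : ↥(PairsSet (m + 1)))) :=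
          SimpleGraph.ConnectedComponent.exact hmk
        have hdown := rReach hm hH hreach
        rw [hrT0] at hdown
        by_cases h1 : (v : ℕ × ℕ).1 = m + 1
        · exfalso
          obtain ⟨hne, ha1, ha2, hb1, hb2⟩ := v.2
          have hb2' : (v : ℕ × ℕ).2 ≤ m := by omega
          rw [rmap_pend1 hm v h1 (attach_mem hm hb1 hb2')] at hdown
          have hmk2 : (incGraph (PairsSet m) H).connectedComponentMk (Sum.inl ⟨((v : ℕ × ℕ).2, (v : ℕ × ℕ).2 % m + 1),
              attach_mem hm hb1 hb2'⟩) = c₁ :=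
            (SimpleGraph.ConnectedComponent.sound hdown).trans hmkt0
          exact attach_not321 hm hb1 hb2' ((hiff _).mp hmk2)
        by_cases h2 : (v : ℕ × ℕ).2 = m + 1
        · exfalso
          obtain ⟨hne, ha1, ha2, hb1, hb2⟩ := v.2
          have ha2' : (v : ℕ × ℕ).1 ≤ m := by omega
          rw [rmap_pend2 hm v h1 h2 (pcpair_mem hm ha1 ha2')] at hdown
          have hmk2 : (incGraph (PairsSet m) H).connectedComponentMk (Sum.inl ⟨(pcF m (v : ℕ × ℕ).1, (v : ℕ × ℕ).1),
              pcpair_mem hm ha1 ha2'⟩) = c₁ :=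
            (SimpleGraph.ConnectedComponent.sound hdown).trans hmkt0
          have hmem321 := (hiff _).mp hmk2
          have hpair : ((pcF m (v : ℕ × ℕ).1, (v : ℕ × ℕ).1) : ℕ × ℕ) =
              (pcF m (v : ℕ × ℕ).1, pcF m (v : ℕ × ℕ).1 % m + 1) := by
            rw [suc_pc hm ha1 ha2']
          have hmem321' : ((pcF m (v : ℕ × ℕ).1, (v : ℕ × ℕ).1) : ℕ × ℕ) ∈ Tset 3 2 1 :=
            hmem321
          rw [hpair] at hmem321'
          exact attach_not321 hm (pc_lb m _) (pc_ub hm _) hmem321'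
        · obtain ⟨hne, ha1, ha2, hb1, hb2⟩ := v.2
          have hvm : (v : ℕ × ℕ) ∈ PairsSet m := ⟨hne, ha1, by omega, hb1, by omega⟩
          rw [rmap_old hm v (by omega) (by omega) hvm] at hdown
          have hmk2 : (incGraph (PairsSet m) H).connectedComponentMk (Sum.inl ⟨(v : ℕ × ℕ), hvm⟩) = c₁ :=
            (SimpleGraph.ConnectedComponent.sound hdown).trans hmkt0
          exact (hiff _).mp hmk2
      · intro hvT
        have hvm : (v : ℕ × ℕ) ∈ PairsSet m := by
          rcases mem_Tset.mp hvT with h | h | h <;> rw [h] <;>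
            exact ⟨by omega, by omega, by omega, by omega, by omega⟩
        have hmkv : (incGraph (PairsSet m) H).connectedComponentMk (Sum.inl ⟨(v : ℕ × ℕ), hvm⟩) = c₁ :=
          (hiff ⟨(v : ℕ × ℕ), hvm⟩).mpr hvT
        have hreach : (incGraph (PairsSet m) H).Reachable (Sum.inl ⟨(v : ℕ × ℕ), hvm⟩) (Sum.inl (⟨((3 : ℕ), (2 : ℕ)), ht0m⟩ : ↥(PairsSet m))) :=
          SimpleGraph.ConnectedComponent.exact (hmkv.trans hmkt0.symm)
        have hup := up _ _ hreach
        have hinc : ιmap m H (Sum.inl ⟨(v : ℕ × ℕ), hvm⟩) = Sum.inl v :=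
          congrArg Sum.inl (Subtype.ext rfl)
        rw [hinc, hiT0] at hup
        exact SimpleGraph.ConnectedComponent.sound hup

/-- **Inductive step.** Let `n ≥ 4` and let `H` be a set of triangles `T(a,b,c) ⊆ [n-1]^(2)`
forming an acyclic hypergraph on vertex set `[n-1]^(2)` with exactly two components, one
being the vertex set of `T(3,2,1)` and the other containing all remaining vertices.  Let
`D = {T(i, i⁺, n) : i ∈ [n-1]}`, where `i⁺ = (i mod (n-1)) + 1` is the cyclic successor of
`i` in `[n-1]`.  Then the hypergraph on vertex set `[n]^(2)` with hyperedge set `H ∪ D` is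
acyclic with exactly two components: one being the vertex set of `T(3,2,1)`, and one
containing all other vertices of `[n]^(2)`. -/
theorem inductive_step (n : ℕ) (hn : 4 ≤ n) (H : Set (Set (ℕ × ℕ)))
    (hH : ∀ h ∈ H, IsTriangle (n - 1) h)
    (hacyc : (incGraph (PairsSet (n - 1)) H).IsAcyclic)
    (hcomp : TwoComponents321 (PairsSet (n - 1)) H) :
    (incGraph (PairsSet n)
        (H ∪ {h | ∃ i : ℕ, 1 ≤ i ∧ i ≤ n - 1 ∧ h = Tset i (i % (n - 1) + 1) n})).IsAcyclic ∧
    TwoComponents321 (PairsSet n)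
        (H ∪ {h | ∃ i : ℕ, 1 ≤ i ∧ i ≤ n - 1 ∧ h = Tset i (i % (n - 1) + 1) n}) := by
  obtain ⟨m, rfl⟩ : ∃ m, n = m + 1 := ⟨n - 1, by omega⟩
  have hm : 3 ≤ m := by omega
  exact master m hm H hH hacyc hcomp
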